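/- For all integers n and d with 4 ≤ d < (n−1)/2, t(n,d) ≤ n − 1 + ⌈(n−2)/(d−2)⌉. -/

import Mathlib

/-- An edge-coloring with `k` colors (adjacent edges may receive the same color) is a
`k`-rainbow connected coloring if every two distinct vertices are joined by a path whose
edges all receive distinct colors; `G` is `k`-rainbow connected if such a coloring exists. -/
def IsRainbowConnected {V : Type*} (G : SimpleGraph V) (k : ℕ) : Prop :=
  ∃ c : Sym2 V → Fin k, ∀ u v : V, u ≠ v →
    ∃ p : G.Walk u v, p.IsPath ∧ (p.edges.map c).Nodup

/-- `minRainbowEdges n d` is `t(n,d)`: the minimum number of edges among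
all graphs of order `n` that are `d`-rainbow connected. -/
noncomputable def minRainbowEdges (n d : ℕ) : ℕ :=
  sInf {m | ∃ G : SimpleGraph (Fin n), G.edgeSet.ncard = m ∧ IsRainbowConnected G d}

set_option maxHeartbeats 2000000 in
/-- For `4 ≤ d < (n-1)/2`, `t(n,d) ≤ n - 1 + ⌈(n-2)/(d-2)⌉. -/
theorem t_upper_of_four_le (n d : ℕ) (hd : 4 ≤ d) (hdn : 2 * d + 1 < n) :
    (minRainbowEdges n d : ℤ) ≤
      (n : ℤ) - 1 + ⌈((n : ℚ) - 2) / ((d : ℚ) - 2)⌉ := by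
  obtain ⟨m, rfl⟩ : ∃ m, d = m + 2 := ⟨d - 2, by omega⟩
  obtain ⟨N, rfl⟩ : ∃ N, n = N + 2 := ⟨n - 2, by omega⟩
  have hm2 : 2 ≤ m := by omega
  have hm0 : 0 < m := by omega
  have hNd : 2 * m + 3 ≤ N := by omega
  set q : ℕ := (N - 1) / m + 1 with hq
  -- vertices
  set u : Fin (N + 2) := ⟨N, by omega⟩ with hu
  set v : Fin (N + 2) := ⟨N + 1, by omega⟩ with hv
  set ι : ℕ → Fin (N + 2) := fun a => if h : a < N then ⟨a, by omega⟩ else u with hι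
  have hιval : ∀ a, a < N → (ι a).val = a := by
    intro a h; simp [hι, h]
  -- graph
  set r : Fin (N+2) → Fin (N+2) → Prop := fun a b =>
    (a.val = N ∧ b.val = N+1) ∨
    (a.val = N ∧ b.val < N ∧ b.val % m = 0) ∨
    (a.val + 1 < N ∧ b.val = a.val + 1 ∧ ¬ b.val % m = 0) ∨
    (a.val < N ∧ b.val = N+1 ∧ (a.val % m = m-1 ∨ a.val = N-1)) with hr
  set G : SimpleGraph (Fin (N+2)) := SimpleGraph.fromRel r with hG
  -- coloring
  set gval : Fin (N+2) → Fin (N+2) → ℕ := fun a b =>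
    if max a.val b.val = N+1 then (if min a.val b.val = N then 0 else min a.val b.val % m + 2)
    else if max a.val b.val = N then 1 else min a.val b.val % m + 2 with hgval
  have hglt : ∀ a b, gval a b < m + 2 := by
    intro a b
    have h1 : min a.val b.val % m < m := Nat.mod_lt _ hm0
    simp only [hgval]
    split_ifs <;> omega
  have hgsymm : ∀ a b, gval a b = gval b a := by
    intro a b
    simp only [hgval, Nat.max_comm a.val b.val, Nat.min_comm a.val b.val]
  set c : Sym2 (Fin (N+2)) → Fin (m+2) :=
    Sym2.lift ⟨fun a b => ⟨gval a b, hglt a b⟩, fun a b => by simp [Fin.ext_iff, hgsymm a b]⟩ with hc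
  have hcval : ∀ x y : Fin (N+2), (c s(x, y)).val = gval x y := by
    intro x y; simp [hc]
  -- arithmetic helpers
  have hdm : ∀ x : ℕ, m * (x / m) + x % m = x := fun x => Nat.div_add_mod x m
  have hmodlt : ∀ x : ℕ, x % m < m := fun x => Nat.mod_lt _ hm0
  have hdivmono : ∀ x y : ℕ, x ≤ y → x / m ≤ y / m := fun x y h => Nat.div_le_div_right h
  have hsame : ∀ a b : ℕ, a ≤ b → b / m = a / m → b % m = a % m + (b - a) := by
    intro a b hab hdiv
    have h1 := hdm a
    have h2 := hdm b
    rw [hdiv] at h2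
    generalize m * (a / m) = A at h1 h2
    omega
  -- color lemmas
  have hc_uv : (c s(u, v)).val = 0 := by
    rw [hcval]; simp only [hgval, hu, hv]
    rw [if_pos (by omega), if_pos (by omega)]
  have hc_us : ∀ a, a < N → (c s(u, ι a)).val = 1 := by
    intro a ha
    rw [hcval]; simp only [hgval, hu, hιval a ha]
    rw [if_neg (by omega), if_pos (by omega)]
  have hc_step : ∀ a, a < N → a + 1 < N → (c s(ι a, ι (a+1))).val = a % m + 2 := by
    intro a ha ha1
    rw [hcval]; simp only [hgval, hιval a ha, hιval (a+1) ha1]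
    rw [if_neg (by omega), if_neg (by omega), show a ⊓ (a+1) = a by omega]
  have hc_end : ∀ a, a < N → (c s(ι a, v)).val = a % m + 2 := by
    intro a ha
    rw [hcval]; simp only [hgval, hv, hιval a ha]
    rw [if_pos (by omega), if_neg (by omega), show a ⊓ (N+1) = a by omega]
  -- adjacency lemmas
  have hadj_uv : G.Adj u v := by
    rw [hG, SimpleGraph.fromRel_adj]
    exact ⟨by simp [hu, hv, Fin.ext_iff], Or.inl (Or.inl ⟨rfl, rfl⟩)⟩
  have hadj_us : ∀ a, a < N → a % m = 0 → G.Adj u (ι a) := by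
    intro a ha ham
    rw [hG, SimpleGraph.fromRel_adj]
    refine ⟨by simp [hu, Fin.ext_iff, hιval a ha]; omega, Or.inl ?_⟩
    exact Or.inr (Or.inl ⟨rfl, by rw [hιval a ha]; exact ha, by rw [hιval a ha]; exact ham⟩)
  have hadj_step : ∀ a, a + 1 < N → ¬ (a+1) % m = 0 → G.Adj (ι a) (ι (a+1)) := by
    intro a ha ham
    rw [hG, SimpleGraph.fromRel_adj]
    refine ⟨by simp [Fin.ext_iff, hιval a (by omega), hιval (a+1) ha], Or.inl ?_⟩
    refine Or.inr (Or.inr (Or.inl ⟨?_, ?_, ?_⟩))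
    · rw [hιval a (by omega)]; exact ha
    · rw [hιval a (by omega), hιval (a+1) ha]
    · rw [hιval (a+1) ha]; exact ham
  have hadj_end : ∀ a, a < N → (a % m = m - 1 ∨ a = N - 1) → G.Adj (ι a) v := by
    intro a ha ham
    rw [hG, SimpleGraph.fromRel_adj]
    refine ⟨by simp [hv, Fin.ext_iff, hιval a ha]; omega, Or.inl ?_⟩
    refine Or.inr (Or.inr (Or.inr ⟨?_, rfl, ?_⟩)) <;> rw [hιval a ha]
    · exact ha
    · exact ham
  have hιinj : ∀ j1 j2, j1 < N → j2 < N → ι j1 = ι j2 → j1 = j2 := by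
    intro j1 j2 h1 h2 h
    have := congrArg Fin.val h
    rwa [hιval j1 h1, hιval j2 h2] at this
  -- key: walk along one branch from ι a to ι (a+k)
  have key : ∀ k a, a + k < N → (a + k) / m = a / m →
      ∃ w : G.Walk (ι a) (ι (a+k)), w.IsPath ∧
        (∀ x ∈ w.support, ∃ j, a ≤ j ∧ j ≤ a + k ∧ x = ι j) ∧
        (w.edges.map c).Nodup ∧
        (∀ col ∈ w.edges.map c, a % m + 2 ≤ col.val ∧ col.val ≤ (a+k) % m + 1) := by
    intro k
    induction k with
    | zero =>
      intro a h _
      refine ⟨SimpleGraph.Walk.nil, SimpleGraph.Walk.IsPath.nil, ?_, by simp, by simp⟩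
      intro x hx
      simp only [SimpleGraph.Walk.support_nil, List.mem_singleton] at hx
      exact ⟨a, le_refl a, by omega, hx⟩
    | succ k ih =>
      intro a h hdiv
      rw [show a + (k+1) = a + k + 1 by omega] at h hdiv ⊢
      -- the next vertex is in the same branch
      have hne0 : ¬ (a + k + 1) % m = 0 := by
        intro h0
        have h1 := hdm (a + k + 1)
        have h2 := hdm a
        rw [hdiv, h0] at h1
        generalize m * (a / m) = A at h1 h2
        omega
      have hdiv' : (a + k) / m = a / m := by
        have h1 : a / m ≤ (a + k) / m := hdivmono _ _ (by omega)
        have h2 : (a + k) / m ≤ (a + k + 1) / m := hdivmono _ _ (by omega)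
        omega
      have hmod : (a + k + 1) % m = (a + k) % m + 1 := by
        have h1 := hsame a (a+k) (by omega) hdiv'
        have h2 := hsame a (a+k+1) (by omega) hdiv
        omega
      obtain ⟨w, hwp, hws, hwn, hwc⟩ := ih a (by omega) hdiv'
      have hadj : G.Adj (ι (a+k)) (ι (a+k+1)) := hadj_step (a+k) (by omega) hne0
      have hnotmem : ι (a+k+1) ∉ w.support := by
        intro hmem
        obtain ⟨j, hj1, hj2, hj3⟩ := hws _ hmem
        have := hιinj _ _ (by omega) (by omega) hj3
        omega
      refine ⟨w.concat hadj, ?_, ?_, ?_, ?_⟩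
      · rw [SimpleGraph.Walk.isPath_def,
          SimpleGraph.Walk.support_concat, List.nodup_append]
        refine ⟨hwp.support_nodup, by simp, ?_⟩
        intro x hx y hy hxy; subst hxy
        simp only [List.mem_singleton] at hy
        exact hnotmem (hy ▸ hx)
      · intro x hx
        rw [SimpleGraph.Walk.support_concat,
          List.mem_append] at hx
        rcases hx with hx | hx
        · obtain ⟨j, hj1, hj2, hj3⟩ := hws _ hx
          exact ⟨j, hj1, by omega, hj3⟩
        · simp only [List.mem_singleton] at hx
          exact ⟨a + k + 1, by omega, by omega, hx⟩
      · rw [SimpleGraph.Walk.edges_concat,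
          List.concat_eq_append, List.map_append, List.nodup_append]
        refine ⟨hwn, by simp, ?_⟩
        intro x hx y hy hxy; subst hxy
        simp only [List.map_cons, List.map_nil, List.mem_singleton] at hy
        have hb := (hwc x hx).2
        rw [hy] at hb
        have : (c s(ι (a+k), ι (a+k+1))).val = (a+k) % m + 2 := hc_step (a+k) (by omega) (by omega)
        omega
      · intro col hcol
        rw [SimpleGraph.Walk.edges_concat,
          List.concat_eq_append, List.map_append, List.mem_append] at hcol
        have hstep : (c s(ι (a+k), ι (a+k+1))).val = (a+k) % m + 2 := hc_step (a+k) (by omega) (by omega)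
        rcases hcol with hcol | hcol
        · have := hwc col hcol
          omega
        · simp only [List.map_cons, List.map_nil, List.mem_singleton] at hcol
          subst hcol
          have hge := hsame a (a+k) (by omega) hdiv'
          omega
  -- H1 : walk from u down into a branch
  have H1 : ∀ a, a < N → ∃ w : G.Walk u (ι a), w.IsPath ∧
      (∀ x ∈ w.support, x = u ∨ ∃ j, j < N ∧ j / m = a / m ∧ x = ι j) ∧
      (w.edges.map c).Nodup ∧
      (∀ col ∈ w.edges.map c, 1 ≤ col.val ∧ col.val ≤ a % m + 1) := by
    intro a ha
    have hs1 : m * (a/m) + a % m = a := hdm a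
    set s : ℕ := m * (a/m) with hsdef
    have hs0 : s % m = 0 := Nat.mul_mod_right m _
    have hsdiv : s / m = a / m := Nat.mul_div_cancel_left _ hm0
    have hsle : s ≤ a := by omega
    have hEq : s + a % m = a := hs1
    have hEqm : (s + a % m) % m = a % m := by rw [hEq]
    obtain ⟨w, hwp, hws, hwn, hwc⟩ := key (a % m) s (by omega)
      (by rw [hEq, hsdiv])
    have hsN : s < N := by omega
    refine ⟨SimpleGraph.Walk.cons (hadj_us s hsN hs0) (w.copy rfl (congrArg ι hEq)),
      ?_, ?_, ?_, ?_⟩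
    · rw [SimpleGraph.Walk.cons_isPath_iff, SimpleGraph.Walk.isPath_copy,
        SimpleGraph.Walk.support_copy]
      refine ⟨hwp, fun hmem => ?_⟩
      obtain ⟨j, hj1, hj2, hj3⟩ := hws _ hmem
      have := congrArg Fin.val hj3
      rw [hιval j (by omega)] at this
      simp only [hu] at this
      omega
    · intro x hx
      rw [SimpleGraph.Walk.support_cons, SimpleGraph.Walk.support_copy, List.mem_cons] at hx
      rcases hx with hx | hx
      · exact Or.inl hx
      · obtain ⟨j, hj1, hj2, hj3⟩ := hws _ hx
        refine Or.inr ⟨j, by omega, ?_, hj3⟩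
        have g1 := hdivmono s j hj1
        have g2 := hdivmono j a (by omega)
        omega
    · rw [SimpleGraph.Walk.edges_cons, SimpleGraph.Walk.edges_copy, List.map_cons,
        List.nodup_cons]
      refine ⟨fun hmem => ?_, hwn⟩
      have hb := (hwc _ hmem).1
      rw [hc_us s hsN] at hb
      omega
    · intro col hcol
      rw [SimpleGraph.Walk.edges_cons, SimpleGraph.Walk.edges_copy, List.map_cons,
        List.mem_cons] at hcol
      rcases hcol with hcol | hcol
      · rw [hcol, hc_us s hsN]; omega
      · have := hwc col hcol
        omega
  -- H2 : walk from inside a branch to v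
  have H2 : ∀ a, a < N → ∃ w : G.Walk (ι a) v, w.IsPath ∧
      (∀ x ∈ w.support, x = v ∨ ∃ j, j < N ∧ j / m = a / m ∧ x = ι j) ∧
      (w.edges.map c).Nodup ∧
      (∀ col ∈ w.edges.map c, a % m + 2 ≤ col.val ∧ col.val ≤ m + 1) := by
    intro a ha
    have hs1 : m * (a/m) + a % m = a := hdm a
    have hma : a % m < m := hmodlt a
    obtain ⟨e, he1, he2, he3, he4⟩ :
        ∃ e, a ≤ e ∧ e < N ∧ e / m = a / m ∧ (e % m = m - 1 ∨ e = N - 1) := by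
      obtain ⟨B, hB⟩ : ∃ B, m * (a/m) = B := ⟨_, rfl⟩
      rw [hB] at hs1
      rcases le_or_gt (B + (m-1)) (N-1) with hcase | hcase
      · have hdz : (m-1)/m = 0 := Nat.div_eq_of_lt (by omega)
        have hmz : (m-1)%m = m-1 := Nat.mod_eq_of_lt (by omega)
        refine ⟨B + (m-1), by omega, by omega, ?_, Or.inl ?_⟩
        · rw [← hB, Nat.mul_add_div hm0, hdz, Nat.add_zero]
        · rw [← hB, Nat.mul_add_mod, hmz]
      · refine ⟨N - 1, by omega, by omega, ?_, Or.inr rfl⟩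
        have g1 := hdivmono a (N-1) (by omega)
        have g2 : (N-1) / m < a / m + 1 := by
          rw [Nat.div_lt_iff_lt_mul hm0, show (a/m+1)*m = B + m by rw [← hB]; ring]
          omega
        omega
    have he5 : e % m = a % m + (e - a) := hsame a e he1 he3
    have heEq : a + (e - a) = e := by omega
    have heEqm : (a + (e - a)) % m = e % m := by rw [heEq]
    obtain ⟨w, hwp, hws, hwn, hwc⟩ := key (e - a) a (by omega) (by rw [heEq]; exact he3)
    have hadj : G.Adj (ι (a + (e - a))) v := by rw [heEq]; exact hadj_end e he2 he4
    have hce : (c s(ι (a + (e - a)), v)).val = e % m + 2 := by rw [heEq]; exact hc_end e he2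
    have hme : e % m < m := hmodlt e
    refine ⟨w.concat hadj, ?_, ?_, ?_, ?_⟩
    · rw [SimpleGraph.Walk.isPath_def, SimpleGraph.Walk.support_concat, List.nodup_append]
        
      refine ⟨hwp.support_nodup, by simp, ?_⟩
      intro x hx y hy hxy; subst hxy
      simp only [List.mem_singleton] at hy
      obtain ⟨j, hj1, hj2, hj3⟩ := hws _ hx
      have := congrArg Fin.val (hy ▸ hj3 : v = ι j)
      rw [hιval j (by omega)] at this
      simp only [hv] at this
      omega
    · intro x hx
      rw [SimpleGraph.Walk.support_concat, List.mem_append] at hx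
      rcases hx with hx | hx
      · obtain ⟨j, hj1, hj2, hj3⟩ := hws _ hx
        refine Or.inr ⟨j, by omega, ?_, hj3⟩
        have g1 := hdivmono a j hj1
        have g2 := hdivmono j e (by omega)
        omega
      · simp only [List.mem_singleton] at hx
        exact Or.inl hx
    · rw [SimpleGraph.Walk.edges_concat, List.concat_eq_append, List.map_append,
        List.nodup_append]
      refine ⟨hwn, by simp, ?_⟩
      intro x hx y hy hxy; subst hxy
      simp only [List.map_cons, List.map_nil, List.mem_singleton] at hy
      have hb := (hwc x hx).2
      rw [hy, hce] at hb
      omega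
    · intro col hcol
      rw [SimpleGraph.Walk.edges_concat, List.concat_eq_append, List.map_append,
        List.mem_append] at hcol
      rcases hcol with hcol | hcol
      · have := hwc col hcol
        omega
      · simp only [List.map_cons, List.map_nil, List.mem_singleton] at hcol
        rw [hcol, hce]
        omega
  -- reversal helper
  have Psymm : ∀ (x y : Fin (N+2)),
      (∃ p : G.Walk x y, p.IsPath ∧ (p.edges.map c).Nodup) →
      (∃ p : G.Walk y x, p.IsPath ∧ (p.edges.map c).Nodup) := by
    rintro x y ⟨p, hp, hn⟩
    exact ⟨p.reverse, hp.reverse,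
      by rw [SimpleGraph.Walk.edges_reverse, List.map_reverse, List.nodup_reverse]; exact hn⟩
  -- cross-branch walks
  have cross : ∀ a b, a < N → b < N → ¬ a / m = b / m → a % m ≤ b % m →
      ∃ p : G.Walk (ι a) (ι b), p.IsPath ∧ (p.edges.map c).Nodup := by
    intro a b ha hb hdiff hmle
    obtain ⟨w1, h1p, h1s, h1n, h1c⟩ := H1 a ha
    obtain ⟨w2, h2p, h2s, h2n, h2c⟩ := H2 b hb
    refine ⟨w1.reverse.append (SimpleGraph.Walk.cons hadj_uv w2.reverse), ?_, ?_⟩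
    · rw [SimpleGraph.Walk.isPath_def, SimpleGraph.Walk.support_append,
        SimpleGraph.Walk.support_cons, List.tail_cons, List.nodup_append]
      refine ⟨h1p.reverse.support_nodup, h2p.reverse.support_nodup, ?_⟩
      intro x hx y hy hxy; subst hxy
      rw [SimpleGraph.Walk.support_reverse, List.mem_reverse] at hx hy
      rcases h1s x hx with h1 | ⟨j, hj1, hj2, hj3⟩ <;>
        rcases h2s x hy with h2 | ⟨j', hj1', hj2', hj3'⟩
      · have := congrArg Fin.val (h1 ▸ h2 : u = v)
        simp only [hu, hv] at this
        omega
      · have := congrArg Fin.val (h1 ▸ hj3' : u = ι j')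
        rw [hιval j' hj1'] at this
        simp only [hu] at this
        omega
      · have := congrArg Fin.val (hj3 ▸ h2 : ι j = v)
        rw [hιval j hj1] at this
        simp only [hv] at this
        omega
      · have := hιinj j j' hj1 hj1' (hj3 ▸ hj3' : ι j = ι j')
        subst this
        exact hdiff (by rw [← hj2, hj2'])
    · rw [SimpleGraph.Walk.edges_append, SimpleGraph.Walk.edges_cons,
        SimpleGraph.Walk.edges_reverse, SimpleGraph.Walk.edges_reverse,
        List.map_append, List.map_reverse, List.map_cons, List.map_reverse,
        List.nodup_append]
      have hbm : 2 ≤ b % m + 2 := by omega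
      refine ⟨List.nodup_reverse.mpr h1n, ?_, ?_⟩
      · rw [List.nodup_cons]
        refine ⟨fun hmem => ?_, List.nodup_reverse.mpr h2n⟩
        rw [List.mem_reverse] at hmem
        have := (h2c _ hmem).1
        rw [hc_uv] at this
        omega
      · intro x hx y hy hxy; subst hxy
        rw [List.mem_reverse] at hx
        have hx1 := (h1c x hx).1
        have hx2 := (h1c x hx).2
        rcases List.mem_cons.mp hy with hy | hy
        · rw [hy] at hx1 hx2
          rw [hc_uv] at hx1
          omega
        · rw [List.mem_reverse] at hy
          have := (h2c x hy).1
          omega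
  -- ordered base case
  have base : ∀ x y : Fin (N+2), x.val < y.val →
      ∃ p : G.Walk x y, p.IsPath ∧ (p.edges.map c).Nodup := by
    intro x y hlt
    have hy2 : y.val < N + 2 := y.2
    rcases lt_or_ge x.val N with hx | hx
    · have hxι : ι x.val = x := Fin.ext (hιval _ hx)
      rcases lt_or_ge y.val N with hy | hy
      · have hyι : ι y.val = y := Fin.ext (hιval _ hy)
        by_cases hbr : (x.val + (y.val - x.val)) / m = x.val / m
        · obtain ⟨w, hp, _, hn, _⟩ := key (y.val - x.val) x.val (by omega) hbr
          refine ⟨w.copy hxι ((congrArg ι (by omega : x.val + (y.val - x.val) = y.val)).trans hyι), ?_, ?_⟩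
          · rwa [SimpleGraph.Walk.isPath_copy]
          · rwa [SimpleGraph.Walk.edges_copy]
        · have hbr' : ¬ y.val / m = x.val / m := by
            rw [show x.val + (y.val - x.val) = y.val by omega] at hbr
            exact hbr
          rcases le_or_gt (x.val % m) (y.val % m) with hmm | hmm
          · obtain ⟨p, hp, hn⟩ := cross x.val y.val hx hy (fun h => hbr' h.symm) hmm
            exact ⟨p.copy hxι hyι, by rwa [SimpleGraph.Walk.isPath_copy],
              by rwa [SimpleGraph.Walk.edges_copy]⟩
          · obtain ⟨p', hp', hn'⟩ := Psymm _ _ (cross y.val x.val hy hx hbr' (by omega))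
            exact ⟨p'.copy hxι hyι, by rwa [SimpleGraph.Walk.isPath_copy],
              by rwa [SimpleGraph.Walk.edges_copy]⟩
      · rcases lt_or_ge y.val (N+1) with hy1 | hy1
        · have hyu : y = u := Fin.ext (by rw [show u.val = N from rfl]; omega)
          subst hyu
          obtain ⟨w, hp, _, hn, _⟩ := H1 x.val hx
          exact Psymm _ _ ⟨w.copy rfl hxι, by rwa [SimpleGraph.Walk.isPath_copy],
            by rwa [SimpleGraph.Walk.edges_copy]⟩
        · have hyv : y = v := Fin.ext (by rw [show v.val = N+1 from rfl]; omega)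
          subst hyv
          obtain ⟨w, hp, _, hn, _⟩ := H2 x.val hx
          exact ⟨w.copy hxι rfl, by rwa [SimpleGraph.Walk.isPath_copy],
            by rwa [SimpleGraph.Walk.edges_copy]⟩
    · have hxu : x = u := Fin.ext (by rw [show u.val = N from rfl]; omega)
      have hyv : y = v := Fin.ext (by rw [show v.val = N+1 from rfl]; omega)
      subst hxu; subst hyv
      refine ⟨SimpleGraph.Walk.cons hadj_uv SimpleGraph.Walk.nil, ?_, by simp⟩
      rw [SimpleGraph.Walk.cons_isPath_iff]
      refine ⟨SimpleGraph.Walk.IsPath.nil, ?_⟩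
      simp only [SimpleGraph.Walk.support_nil, List.mem_singleton]
      intro h
      have := congrArg Fin.val h
      simp only [hu, hv] at this
      omega
  have hrc : IsRainbowConnected G (m+2) := by
    refine ⟨c, fun x y hxy => ?_⟩
    rcases lt_trichotomy x.val y.val with h | h | h
    · exact base x y h
    · exact absurd (Fin.ext h) hxy
    · exact Psymm y x (base y x h)
  -- edge counting
  classical
  have h1m : 1 % m = 1 := Nat.mod_eq_of_lt (by omega)
  set nxt : ℕ → Fin (N+2) := fun i => if i % m = m - 1 ∨ i = N - 1 then v else ι (i+1) with hnxt
  set F : Finset (Sym2 (Fin (N+2))) :=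
    {s(u,v)} ∪ (Finset.range q).image (fun b => s(u, ι (m*b))) ∪
      (Finset.range N).image (fun i => s(ι i, nxt i)) with hF
  have hsubF : ∀ x y : Fin (N+2), r x y → s(x,y) ∈ F := by
    intro x y hxy
    simp only [hr] at hxy
    rw [hF]
    rcases hxy with ⟨hx, hy⟩ | ⟨hx, hy1, hy2⟩ | ⟨hx1, hx2, hx3⟩ | ⟨hx1, hx2, hx3⟩
    · have hxu : x = u := Fin.ext hx
      have hyv : y = v := Fin.ext hy
      rw [hxu, hyv]
      exact Finset.mem_union_left _ (Finset.mem_union_left _ (Finset.mem_singleton_self _))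
    · have hxu : x = u := Fin.ext hx
      have hmb : m * (y.val / m) = y.val := by
        have := hdm y.val
        omega
      have hbq : y.val / m < q := by
        have := hdivmono y.val (N-1) (by omega)
        omega
      refine Finset.mem_union_left _ (Finset.mem_union_right _ ?_)
      rw [Finset.mem_image]
      refine ⟨y.val / m, Finset.mem_range.mpr hbq, ?_⟩
      rw [hmb, hxu, Fin.ext (hιval y.val hy1 : (ι y.val).val = y.val)]
    · refine Finset.mem_union_right _ ?_
      rw [Finset.mem_image]
      refine ⟨x.val, Finset.mem_range.mpr (by omega), ?_⟩
      have hnv : nxt x.val = ι (x.val + 1) := by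
        rw [hnxt]
        refine if_neg ?_
        rintro (hc | hc)
        · have : (x.val + 1) % m = 0 := by
            rw [Nat.add_mod, h1m, hc, show m - 1 + 1 = m by omega, Nat.mod_self]
          exact hx3 (by rw [hx2]; exact this)
        · omega
      rw [hnv, Fin.ext (hιval x.val (by omega) : (ι x.val).val = x.val),
        show ι (x.val + 1) = y from Fin.ext (by rw [hιval _ (by omega)]; omega)]
    · refine Finset.mem_union_right _ ?_
      rw [Finset.mem_image]
      refine ⟨x.val, Finset.mem_range.mpr hx1, ?_⟩
      have hnv : nxt x.val = v := by rw [hnxt]; exact if_pos hx3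
      rw [hnv, Fin.ext (hιval x.val hx1 : (ι x.val).val = x.val),
        show v = y from Fin.ext (by rw [show v.val = N+1 from rfl]; omega)]
  have hcard : F.card ≤ 1 + q + N := by
    rw [hF]
    refine le_trans (Finset.card_union_le _ _) ?_
    have h1 := Finset.card_union_le ({s(u,v)} : Finset (Sym2 (Fin (N+2))))
      ((Finset.range q).image (fun b => s(u, ι (m*b))))
    have h2 := Finset.card_image_le (f := fun b => s(u, ι (m*b))) (s := Finset.range q)
    have h3 := Finset.card_image_le (f := fun i => s(ι i, nxt i)) (s := Finset.range N)
    rw [Finset.card_range] at h2 h3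
    have h4 : ({s(u,v)} : Finset (Sym2 (Fin (N+2)))).card = 1 := Finset.card_singleton _
    omega
  have hedge : G.edgeSet.ncard ≤ 1 + q + N := by
    have hsub : G.edgeSet ⊆ ↑F := by
      intro e he
      induction e using Sym2.ind with
      | _ x y =>
        rw [SimpleGraph.mem_edgeSet, hG, SimpleGraph.fromRel_adj] at he
        obtain ⟨hne, h | h⟩ := he
        · exact Finset.mem_coe.mpr (hsubF x y h)
        · rw [Sym2.eq_swap]; exact Finset.mem_coe.mpr (hsubF y x h)
    calc G.edgeSet.ncard ≤ (↑F : Set (Sym2 (Fin (N+2)))).ncard :=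
          Set.ncard_le_ncard hsub F.finite_toSet
      _ = F.card := Set.ncard_coe_finset F
      _ ≤ 1 + q + N := hcard
  have hmin : minRainbowEdges (N+2) (m+2) ≤ 1 + q + N :=
    le_trans (Nat.sInf_le ⟨G, rfl, hrc⟩) hedge
  -- final arithmetic
  have hceil : (q : ℤ) ≤ ⌈(N : ℚ) / (m : ℚ)⌉ := by
    rw [hq]
    push_cast
    rw [Int.add_one_le_iff, Int.lt_ceil]
    push_cast
    rw [lt_div_iff₀ (by positivity : (0:ℚ) < (m:ℚ))]
    have hh : (N-1)/m * m ≤ N - 1 := Nat.div_mul_le_self _ _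
    have hlt : (N-1)/m * m < N := by omega
    exact_mod_cast hlt
  have hgoalceil : ⌈((↑(N+2) : ℚ) - 2) / ((↑(m+2) : ℚ) - 2)⌉ = ⌈(N : ℚ) / (m : ℚ)⌉ := by
    congr 1
    push_cast
    ring
  rw [hgoalceil]
  have h1 : (minRainbowEdges (N+2) (m+2) : ℤ) ≤ 1 + (q : ℤ) + N := by exact_mod_cast hmin
  push_cast
  linarith [h1, hceil]
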